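/- Let (M,g) be a Kähler manifold of complex dimension n ≥ 2, let 1 ≤ k ≤ n, and suppose the k-Ricci curvature satisfies Ric_k(X,X̄) ≥ (k+1)σ|X|² for all (1,0)-vectors X and all k-dimensional subspaces containing X. Then for every (1,0)-tangent vector X: (k-1)|X|²·Ric(X,X̄) + (n-k)·R(X,X̄,X,X̄) ≥ (n-1)(k+1)σ|X|⁴. -/

import Mathlib

open scoped ComplexConjugate InnerProductSpace

structure IsKahlerCurvature {V : Type*} [AddCommGroup V] [Module ℂ V]
    (R : V → V → V → V → ℂ) : Prop where
  linear_fst : ∀ Y Z W, IsLinearMap ℂ fun X => R X Y Z W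
  conjLinear_snd : ∀ X Z W (c : ℂ) (Y₁ Y₂ : V),
    R X (c • Y₁ + Y₂) Z W = starRingEnd ℂ c * R X Y₁ Z W + R X Y₂ Z W
  conj_symm : ∀ X Y Z W, R X Y Z W = starRingEnd ℂ (R Y X W Z)
  symm_fst_trd : ∀ X Y Z W, R X Y Z W = R Z Y X W
  symm_snd_fourth : ∀ X Y Z W, R X Y Z W = R X W Z Y

private lemma linmap_sum {V : Type*} [NormedAddCommGroup V] [InnerProductSpace ℂ V]
    {n : ℕ} (C : V → ℂ) (hC : IsLinearMap ℂ C) (c : Fin n → ℂ) (w : Fin n → V) :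
    C (∑ i, c i • w i) = ∑ i, c i * C (w i) := by
  calc C (∑ i, c i • w i) = (IsLinearMap.mk' C hC) (∑ i, c i • w i) := rfl
    _ = ∑ i, (IsLinearMap.mk' C hC) (c i • w i) := map_sum _ _ _
    _ = ∑ i, c i * C (w i) := by
        refine Finset.sum_congr rfl fun i _ => ?_
        rw [map_smul, smul_eq_mul]
        rfl

/-- Basis independence of the trace of a sesquilinear form. -/
private lemma sesq_trace_indep {V : Type*} [NormedAddCommGroup V] [InnerProductSpace ℂ V]
    {n : ℕ} (e f : OrthonormalBasis (Fin n) ℂ V) (B : V → V → ℂ)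
    (h₁ : ∀ W, IsLinearMap ℂ fun Z => B Z W)
    (h₂ : ∀ Z, IsLinearMap ℂ fun W => conj (B Z W)) :
    ∑ j, B (f j) (f j) = ∑ i, B (e i) (e i) := by
  have expand : ∀ x : V,
      B x x = ∑ i, ∑ i', ⟪e i, x⟫_ℂ * (⟪x, e i'⟫_ℂ * B (e i) (e i')) := by
    intro x
    have step1 : B x x = ∑ i, ⟪e i, x⟫_ℂ * B (e i) x := by
      have h := linmap_sum (fun Z => B Z x) (h₁ x) (fun i => ⟪e i, x⟫_ℂ) e
      rw [e.sum_repr' x] at h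
      exact h
    rw [step1]
    refine Finset.sum_congr rfl fun i _ => ?_
    have h := linmap_sum (fun W => conj (B (e i) W)) (h₂ (e i)) (fun i' => ⟪e i', x⟫_ℂ) e
    rw [e.sum_repr' x] at h
    have h' : B (e i) x = conj (∑ i', ⟪e i', x⟫_ℂ * conj (B (e i) (e i'))) := by
      rw [← h, Complex.conj_conj]
    rw [h', map_sum (starRingEnd ℂ)]
    rw [Finset.mul_sum]
    refine Finset.sum_congr rfl fun i' _ => ?_
    rw [map_mul, Complex.conj_conj, inner_conj_symm]
  calc ∑ j, B (f j) (f j)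
      = ∑ j, ∑ i, ∑ i', ⟪e i, f j⟫_ℂ * (⟪f j, e i'⟫_ℂ * B (e i) (e i')) := by
        exact Finset.sum_congr rfl fun j _ => expand (f j)
    _ = ∑ i, ∑ i', (∑ j, ⟪e i, f j⟫_ℂ * ⟪f j, e i'⟫_ℂ) * B (e i) (e i') := by
        rw [Finset.sum_comm]
        refine Finset.sum_congr rfl fun i _ => ?_
        rw [Finset.sum_comm]
        refine Finset.sum_congr rfl fun i' _ => ?_
        rw [Finset.sum_mul]
        exact Finset.sum_congr rfl fun j _ => (mul_assoc _ _ _).symm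
    _ = ∑ i, ∑ i', ⟪e i, e i'⟫_ℂ * B (e i) (e i') := by
        refine Finset.sum_congr rfl fun i _ => Finset.sum_congr rfl fun i' _ => ?_
        rw [f.sum_inner_mul_inner]
    _ = ∑ i, B (e i) (e i) := by
        refine Finset.sum_congr rfl fun i _ => ?_
        have he := e.orthonormal
        rw [orthonormal_iff_ite] at he
        have : ∀ i' ∈ Finset.univ, ⟪e i, e i'⟫_ℂ * B (e i) (e i')
            = if i' = i then B (e i) (e i) else 0 := by
          intro i' _
          rw [he i i']
          by_cases h : i = i' <;> simp [h, eq_comm]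
        rw [Finset.sum_congr rfl this]
        simp

theorem stmt_4 {V : Type*} [NormedAddCommGroup V] [InnerProductSpace ℂ V]
    [FiniteDimensional ℂ V]
    (n k : ℕ) (hn : 2 ≤ n) (hk1 : 1 ≤ k) (hkn : k ≤ n)
    (hrank : Module.finrank ℂ V = n)
    (R : V → V → V → V → ℂ) (hR : IsKahlerCurvature R) (σ : ℝ)
    (e : OrthonormalBasis (Fin n) ℂ V)
    (hkRic : ∀ (X : V) (W : Submodule ℂ V), Module.finrank ℂ W = k → X ∈ W →
      ∀ v : OrthonormalBasis (Fin k) ℂ W,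
        ((k : ℝ) + 1) * σ * ‖X‖ ^ 2 ≤ ∑ i : Fin k, (R X X (v i : V) (v i : V)).re) :
    ∀ X : V,
      ((n : ℝ) - 1) * ((k : ℝ) + 1) * σ * ‖X‖ ^ 4 ≤
        ((k : ℝ) - 1) * ‖X‖ ^ 2 * (∑ j : Fin n, (R X X (e j) (e j)).re) +
          ((n : ℝ) - (k : ℝ)) * (R X X X X).re := by
  intro X
  by_cases hX0 : X = 0
  · subst hX0
    have hz : ∀ Z W : V, R 0 0 Z W = 0 := fun Z W => (hR.linear_fst 0 Z W).map_zero
    simp [hz]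
  obtain ⟨n', rfl⟩ : ∃ n', n = n' + 1 := ⟨n - 1, (Nat.succ_pred_eq_of_pos (by omega)).symm⟩
  obtain ⟨k', rfl⟩ : ∃ k', k = k' + 1 := ⟨k - 1, (Nat.succ_pred_eq_of_pos (by omega)).symm⟩
  have hn' : 1 ≤ n' := by omega
  have hk'n' : k' ≤ n' := by omega
  haveI : NeZero n' := ⟨by omega⟩
  have hXn : (0:ℝ) < ‖X‖ := norm_pos_iff.mpr hX0
  set u : V := ((‖X‖:ℂ))⁻¹ • X with hu
  have hu_norm : ‖u‖ = 1 := by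
    rw [hu, norm_smul]
    simp [norm_inv, hXn.ne']
  -- sesquilinearity of B Z W := R X X Z W
  have hB1 : ∀ W, IsLinearMap ℂ fun Z => R X X Z W := by
    intro W
    have h := hR.linear_fst X X W
    refine ⟨fun a b => ?_, fun c a => ?_⟩
    · rw [hR.symm_fst_trd X X (a + b) W, h.map_add,
        hR.symm_fst_trd X X a W, hR.symm_fst_trd X X b W]
    · rw [hR.symm_fst_trd X X (c • a) W, h.map_smul, hR.symm_fst_trd X X a W]
  have hB2smul : ∀ (Z : V) (c : ℂ) (W : V), R X X Z (c • W) = conj c * R X X Z W := by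
    intro Z c W
    have h0 : R X (0:V) Z X = 0 := by
      have := hR.conjLinear_snd X Z X 1 0 0
      simp at this
      linear_combination this
    calc R X X Z (c • W) = R X (c • W) Z X := hR.symm_snd_fourth _ _ _ _
      _ = R X (c • W + 0) Z X := by rw [add_zero]
      _ = conj c * R X W Z X + R X 0 Z X := hR.conjLinear_snd X Z X c W 0
      _ = conj c * R X X Z W := by rw [h0, add_zero, ← hR.symm_snd_fourth]
  have hB2add : ∀ (Z W₁ W₂ : V), R X X Z (W₁ + W₂) = R X X Z W₁ + R X X Z W₂ := by
    intro Z W₁ W₂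
    calc R X X Z (W₁ + W₂) = R X (W₁ + W₂) Z X := hR.symm_snd_fourth _ _ _ _
      _ = R X ((1:ℂ) • W₁ + W₂) Z X := by rw [one_smul]
      _ = conj (1:ℂ) * R X W₁ Z X + R X W₂ Z X := hR.conjLinear_snd X Z X 1 W₁ W₂
      _ = R X X Z W₁ + R X X Z W₂ := by
          rw [map_one, one_mul, hR.symm_snd_fourth X X Z W₁, hR.symm_snd_fourth X X Z W₂]
  have hB2 : ∀ Z, IsLinearMap ℂ fun W => conj (R X X Z W) := by
    intro Z
    refine ⟨fun a b => ?_, fun c a => ?_⟩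
    · rw [hB2add]; exact map_add (starRingEnd ℂ) _ _
    · rw [hB2smul, map_mul, Complex.conj_conj, smul_eq_mul]
  -- an orthonormal basis starting with u
  have hu_orth : Orthonormal ℂ (({0} : Set (Fin (n'+1))).restrict fun _ => u) := by
    rw [orthonormal_iff_ite]
    rintro ⟨i, hi⟩ ⟨j, hj⟩
    simp only [Set.mem_singleton_iff] at hi hj
    subst hi; subst hj
    simp [inner_self_eq_norm_sq_to_K, hu_norm, Set.restrict]
  obtain ⟨f, hf0⟩ := hu_orth.exists_orthonormalBasis_extension_of_card_eq
    (by simpa using hrank)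
  have hf0' : f 0 = u := hf0 0 rfl
  -- the per-subspace inequality
  have key : ∀ j : Fin n',
      ((k':ℝ) + 1 + 1) * σ * ‖X‖ ^ 2 ≤ (R X X u u).re
        + ∑ t : Fin k', (R X X (f (j + ⟨t, lt_of_lt_of_le t.2 hk'n'⟩).succ)
            (f (j + ⟨t, lt_of_lt_of_le t.2 hk'n'⟩).succ)).re := by
    intro j
    set q : Fin k' → Fin n' := fun t => j + ⟨t, lt_of_lt_of_le t.2 hk'n'⟩ with hq
    have hq_inj : Function.Injective q := by
      intro a b hab
      have h1 := add_left_cancel hab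
      have h2 : (a : ℕ) = (b : ℕ) := by
        simpa [Fin.mk.injEq] using h1
      exact Fin.ext h2
    set h : Fin (k'+1) → Fin (n'+1) := Fin.cons 0 (fun t => (q t).succ) with hh
    have hh_inj : Function.Injective h := by
      rw [hh, Fin.cons_injective_iff]
      constructor
      · rintro ⟨t, ht⟩
        exact (Fin.succ_ne_zero (q t) ht).elim
      · intro a b hab
        exact hq_inj (Fin.succ_injective _ hab)
    set g : Fin (k'+1) → V := f ∘ h with hg
    have hg_orth : Orthonormal ℂ g := f.orthonormal.comp h hh_inj
    have hg_li := hg_orth.linearIndependent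
    set W : Submodule ℂ V := Submodule.span ℂ (Set.range g) with hW
    have hWrank : Module.finrank ℂ W = k' + 1 := by
      rw [hW, finrank_span_eq_card hg_li]
      simp
    have hXW : X ∈ W := by
      have hg0 : g 0 = u := by
        rw [hg]; simp [hh, hf0']
      have : X = ((‖X‖:ℂ)) • g 0 := by
        rw [hg0, hu, smul_smul]
        rw [mul_inv_cancel₀ (by exact_mod_cast hXn.ne')]
        simp
      rw [this]
      exact Submodule.smul_mem _ _ (Submodule.subset_span ⟨0, rfl⟩)
    set b : Module.Basis (Fin (k'+1)) ℂ W := Module.Basis.span hg_li with hb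
    have hb_apply : ∀ i, (b i : V) = g i := fun i => congrArg Subtype.val (Module.Basis.span_apply hg_li i)
    have hb_orth : Orthonormal ℂ b := by
      rw [orthonormal_iff_ite]
      intro i j
      rw [orthonormal_iff_ite] at hg_orth
      have hinner : ⟪b i, b j⟫_ℂ = ⟪(b i : V), (b j : V)⟫_ℂ := rfl
      rw [hinner, hb_apply, hb_apply, hg_orth]
    set v : OrthonormalBasis (Fin (k'+1)) ℂ W := b.toOrthonormalBasis hb_orth with hv
    have hv_apply : ∀ i, (v i : V) = g i := by
      intro i
      have : v i = b i := congrFun (b.coe_toOrthonormalBasis hb_orth) i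
      rw [this, hb_apply]
    have H := hkRic X W hWrank hXW v
    push_cast at H
    rw [Fin.sum_univ_succ] at H
    have hv0 : (v 0 : V) = u := by rw [hv_apply]; rw [hg]; simp [hh, hf0']
    rw [hv0] at H
    have hterm : ∀ t : Fin k', (R X X (v t.succ : V) (v t.succ : V)).re
        = (R X X (f (q t).succ) (f (q t).succ)).re := by
      intro t
      rw [hv_apply]
      simp [hg, hh]
    rw [Finset.sum_congr rfl (fun t _ => hterm t)] at H
    exact H
  -- sum the inequalities over j
  have hsum := Finset.sum_le_sum (fun j (_ : j ∈ Finset.univ) => key j)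
  rw [Finset.sum_const, Finset.sum_add_distrib, Finset.sum_const] at hsum
  -- double sum rearrangement
  have hdouble : ∑ j : Fin n', ∑ t : Fin k',
      (R X X (f (j + ⟨t, lt_of_lt_of_le t.2 hk'n'⟩).succ)
        (f (j + ⟨t, lt_of_lt_of_le t.2 hk'n'⟩).succ)).re
      = (k' : ℝ) * ∑ m : Fin n', (R X X (f m.succ) (f m.succ)).re := by
    rw [Finset.sum_comm]
    have hrow : ∀ t : Fin k', ∑ j : Fin n',
        (R X X (f (j + ⟨t, lt_of_lt_of_le t.2 hk'n'⟩).succ)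
          (f (j + ⟨t, lt_of_lt_of_le t.2 hk'n'⟩).succ)).re
        = ∑ m : Fin n', (R X X (f m.succ) (f m.succ)).re := by
      intro t
      exact Fintype.sum_equiv (Equiv.addRight (⟨t, lt_of_lt_of_le t.2 hk'n'⟩ : Fin n'))
        _ _ (fun j => rfl)
    rw [Finset.sum_congr rfl (fun t _ => hrow t), Finset.sum_const]
    simp [nsmul_eq_mul]
  rw [hdouble] at hsum
  -- trace independence
  have htrace : ∑ j : Fin (n'+1), R X X (e j) (e j) = ∑ j : Fin (n'+1), R X X (f j) (f j) :=
    (sesq_trace_indep e f (fun Z W => R X X Z W) hB1 hB2).symm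
  have htrace_re : ∑ j : Fin (n'+1), (R X X (e j) (e j)).re
      = (R X X u u).re + ∑ m : Fin n', (R X X (f m.succ) (f m.succ)).re := by
    rw [← Complex.re_sum, htrace, Fin.sum_univ_succ, hf0']
    simp [Complex.add_re, Complex.re_sum]
  -- R X X u u in terms of R X X X X
  have huu : (R X X u u).re = (‖X‖^2)⁻¹ * (R X X X X).re := by
    have h1 : R X X u u = ((‖X‖:ℂ))⁻¹ * (conj ((‖X‖:ℂ))⁻¹ * R X X X X) := by
      rw [hu, (hB1 (((‖X‖:ℂ))⁻¹ • X)).map_smul, hB2smul]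
      rw [smul_eq_mul]
    rw [h1]
    have h2 : conj ((‖X‖:ℂ))⁻¹ = ((‖X‖:ℂ))⁻¹ := by
      rw [map_inv₀, Complex.conj_ofReal]
    rw [h2]
    have h3 : ((‖X‖:ℂ))⁻¹ * (((‖X‖:ℂ))⁻¹ * R X X X X)
        = Complex.ofReal ((‖X‖^2)⁻¹) * R X X X X := by
      push_cast
      ring
    rw [h3, Complex.re_ofReal_mul]
  -- final algebra
  set r := (R X X X X).re with hr
  set Ric := ∑ j : Fin (n'+1), (R X X (e j) (e j)).re with hRic
  set S := ∑ m : Fin n', (R X X (f m.succ) (f m.succ)).re with hS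
  have hRicS : Ric = (‖X‖^2)⁻¹ * r + S := by rw [htrace_re, huu]
  have hsum' : (n' : ℝ) * (((k':ℝ) + 1 + 1) * σ * ‖X‖ ^ 2)
      ≤ (n' : ℝ) * ((‖X‖^2)⁻¹ * r) + (k' : ℝ) * S := by
    rw [huu] at hsum
    simpa [nsmul_eq_mul] using hsum
  have hX2 : (0:ℝ) < ‖X‖^2 := by positivity
  have hmul := mul_le_mul_of_nonneg_left hsum' (le_of_lt hX2)
  have hinv : ‖X‖^2 * (‖X‖^2)⁻¹ = 1 := mul_inv_cancel₀ hX2.ne'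
  have hA : ‖X‖^2 * ((n':ℝ) * ((‖X‖^2)⁻¹ * r)) = (n':ℝ) * r := by
    rw [show ‖X‖^2 * ((n':ℝ) * ((‖X‖^2)⁻¹ * r))
        = ‖X‖^2 * (‖X‖^2)⁻¹ * ((n':ℝ) * r) from by ring, hinv, one_mul]
  have hS2 : ‖X‖^2 * Ric = r + ‖X‖^2 * S := by
    rw [hRicS, mul_add, ← mul_assoc, hinv, one_mul]
  have hS3 := congrArg (fun x => (k':ℝ) * x) hS2
  push_cast
  linarith [hmul, hA, hS3]
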